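/- Let X be an integrable real random variable on a probability space with law P, let q ∈ (0,1) and λ > 0, and let t be a real with P(X > t) > 0 and P(X ≤ t) > 0. Let μ⁺ = E[X | X > t] and μ⁻ = E[X | X ≤ t] and suppose μ⁻ < t < μ⁺. Let c = ( q/(μ⁺ − t) + (1−q)/(t − μ⁻) )⁻¹ and define D(X) = λ·c·(q/(μ⁺ − t))·(X − t) on {X > t}, D(X) = −λ·c·((1−q)/(t − μ⁻))·(t − X) on {X ≤ t}. If P(X ≤ t) = q, then E[D(X)] = 0; if P(X ≤ t) < q then E[D(X)] > 0; and if P(X ≤ t) > q then E[D(X)] < 0. -/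

import Mathlib

open MeasureTheory

/-- Sign of the expected QEWA increment: it vanishes exactly at the
`q`-quantile (`P(X ≤ t) = q`), is positive when `P(X ≤ t) < q`, and negative
when `P(X ≤ t) > q`. -/
theorem qewa_expected_increment_sign {Ω : Type*} [MeasurableSpace Ω]
    (P : Measure Ω) [IsProbabilityMeasure P]
    (X : Ω → ℝ) (hXm : Measurable X) (hX : Integrable X P)
    (t q lam μp μm c : ℝ) (hq0 : 0 < q) (hq1 : q < 1) (hlam : 0 < lam)
    (hgt : 0 < P {ω | t < X ω}) (hle : 0 < P {ω | X ω ≤ t})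
    (hμp : μp = (∫ ω in {ω | t < X ω}, X ω ∂P) / (P {ω | t < X ω}).toReal)
    (hμm : μm = (∫ ω in {ω | X ω ≤ t}, X ω ∂P) / (P {ω | X ω ≤ t}).toReal)
    (h1 : μm < t) (h2 : t < μp)
    (hc : c = (q / (μp - t) + (1 - q) / (t - μm))⁻¹) :
    ((P {ω | X ω ≤ t}).toReal = q →
        ∫ ω, (if t < X ω then lam * c * (q / (μp - t)) * (X ω - t)
              else -(lam * c * ((1 - q) / (t - μm)) * (t - X ω))) ∂P = 0) ∧
    ((P {ω | X ω ≤ t}).toReal < q →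
        0 < ∫ ω, (if t < X ω then lam * c * (q / (μp - t)) * (X ω - t)
              else -(lam * c * ((1 - q) / (t - μm)) * (t - X ω))) ∂P) ∧
    (q < (P {ω | X ω ≤ t}).toReal →
        ∫ ω, (if t < X ω then lam * c * (q / (μp - t)) * (X ω - t)
              else -(lam * c * ((1 - q) / (t - μm)) * (t - X ω))) ∂P < 0) := by
  set A : Set Ω := {ω | t < X ω} with hAdef
  set B : Set Ω := {ω | X ω ≤ t} with hBdef
  have hA : MeasurableSet A := measurableSet_lt measurable_const hXm
  have hB : MeasurableSet B := measurableSet_le hXm measurable_const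
  have hBA : B = Aᶜ := by ext ω; simp [hAdef, hBdef, not_lt]
  set pA : ℝ := (P A).toReal with hpA
  set pB : ℝ := (P B).toReal with hpB
  have hpA0 : 0 < pA := ENNReal.toReal_pos hgt.ne' (measure_ne_top P A)
  have hpB0 : 0 < pB := ENNReal.toReal_pos hle.ne' (measure_ne_top P B)
  have hsum : pA + pB = 1 := by
    rw [hpA, hpB, hBA, ← ENNReal.toReal_add (measure_ne_top P A) (measure_ne_top P Aᶜ),
      measure_add_measure_compl hA, measure_univ, ENNReal.toReal_one]
  set a : ℝ := lam * c * (q / (μp - t)) with ha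
  set b : ℝ := lam * c * ((1 - q) / (t - μm)) with hb
  have hμpt : (0:ℝ) < μp - t := by linarith
  have hμmt : (0:ℝ) < t - μm := by linarith
  have hq1' : (0:ℝ) < 1 - q := by linarith
  have hc0 : 0 < c := by rw [hc]; positivity
  have hIA : ∫ ω in A, X ω ∂P = μp * pA := by rw [hμp]; field_simp
  have hIB : ∫ ω in B, X ω ∂P = μm * pB := by rw [hμm]; field_simp
  have hint1 : Integrable (fun ω => a * (X ω - t)) P :=
    (hX.sub (integrable_const t)).const_mul a
  have hint2 : Integrable (fun ω => -(b * (t - X ω))) P :=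
    (((integrable_const t).sub hX).const_mul b).neg
  have hfeq : (fun ω => (if t < X ω then lam * c * (q / (μp - t)) * (X ω - t)
              else -(lam * c * ((1 - q) / (t - μm)) * (t - X ω))))
      = fun ω => A.indicator (fun ω => a * (X ω - t)) ω
        + B.indicator (fun ω => -(b * (t - X ω))) ω := by
    funext ω
    by_cases h : t < X ω
    · have hωA : ω ∈ A := h
      have hωB : ω ∉ B := by simp [hBdef, not_le.mpr h]
      simp [Set.indicator_of_mem hωA, Set.indicator_of_notMem hωB, ha, h]
    · have hωA : ω ∉ A := h
      have hωB : ω ∈ B := not_lt.mp h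
      simp [Set.indicator_of_notMem hωA, Set.indicator_of_mem hωB, hb, h]
  have key : ∫ ω, (if t < X ω then lam * c * (q / (μp - t)) * (X ω - t)
              else -(lam * c * ((1 - q) / (t - μm)) * (t - X ω))) ∂P
      = lam * c * (q - pB) := by
    rw [hfeq, integral_add (hint1.indicator hA) (hint2.indicator hB),
      integral_indicator hA, integral_indicator hB]
    have e1 : ∫ ω in A, a * (X ω - t) ∂P = a * (μp * pA - pA * t) := by
      rw [integral_const_mul, integral_sub hX.restrict (integrable_const t),
        hIA, setIntegral_const, smul_eq_mul]; rfl
    have e2 : ∫ ω in B, -(b * (t - X ω)) ∂P = -(b * (pB * t - μm * pB)) := by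
      rw [integral_neg, integral_const_mul,
        integral_sub (integrable_const t) hX.restrict, hIB, setIntegral_const, smul_eq_mul]; rfl
    rw [e1, e2]
    have hA1 : pA = 1 - pB := by linarith
    have t1 : a * (μp * pA - pA * t) = lam * c * q * pA := by
      rw [ha]; field_simp
    have t2 : b * (pB * t - μm * pB) = lam * c * (1 - q) * pB := by
      rw [hb]; field_simp
    rw [t1, t2, hA1]; ring
  have hlc : 0 < lam * c := mul_pos hlam hc0
  refine ⟨fun h => by rw [key, h]; ring, fun h => by rw [key]; nlinarith, fun h => by
    rw [key]; nlinarith⟩
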